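/- Let G be a connected graph on n vertices and k a positive integer with k ≤ n. Then there exists a partition of V(G) into parts each inducing a connected subgraph of G, such that each part has size at most k, and any part of size strictly less than k is not adjacent to another part of size strictly less than k. -/

import Mathlib

open SimpleGraph Finset

section aux

variable {V : Type*} [Fintype V] [DecidableEq V] (G : SimpleGraph V)

private lemma reach_induce_of_walk {s : Set V} : ∀ {a b : V} (ha : a ∈ s) (hb : b ∈ s)
    (p : G.Walk a b), (∀ x ∈ p.support, x ∈ s) →
    (G.induce s).Reachable ⟨a, ha⟩ ⟨b, hb⟩ := by
  intro a b ha hb p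
  induction p with
  | nil => intro _; exact Reachable.refl _
  | @cons a c b h q ih =>
    intro hp
    have hc : c ∈ s := hp c (by simp [SimpleGraph.Walk.support_cons])
    have hadj : (G.induce s).Adj ⟨a, ha⟩ ⟨c, hc⟩ := h
    exact hadj.reachable.trans (ih hc hb fun x hx => hp x (by simp [SimpleGraph.Walk.support_cons, hx]))

private lemma crossing_aux {C : Finset V} (T : Finset V) :
    ∀ {a b : (↑C : Set V)} (_ : (G.induce (↑C : Set V)).Walk a b),
    (a : V) ∈ T → (b : V) ∉ T → ∃ u ∈ T, ∃ w ∈ C, w ∉ T ∧ G.Adj u w := by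
  intro a b p
  induction p with
  | nil => intro ha hb; exact absurd ha hb
  | @cons a c b h q ih =>
    intro ha hb
    by_cases hc : (c : V) ∈ T
    · exact ih hc hb
    · exact ⟨a, ha, c, c.2, hc, h⟩

private lemma exists_conn_subset {C : Finset V} (hC : (G.induce (↑C : Set V)).Connected) :
    ∀ m : ℕ, 0 < m → m ≤ C.card →
    ∃ T ⊆ C, T.card = m ∧ (G.induce (↑T : Set V)).Connected := by
  intro m
  induction m with
  | zero => intro h; exact absurd h (lt_irrefl 0)
  | succ m ih =>
    intro _ hmC
    rcases Nat.eq_zero_or_pos m with rfl | hm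
    · obtain ⟨v, hv⟩ := Finset.card_pos.mp (lt_of_lt_of_le Nat.one_pos hmC)
      refine ⟨{v}, Finset.singleton_subset_iff.mpr hv, Finset.card_singleton v, ?_⟩
      rw [SimpleGraph.connected_iff]
      constructor
      · intro x y
        have : x = y := by
          ext
          have hx := x.2
          have hy := y.2
          simp only [Finset.coe_singleton, Set.mem_singleton_iff] at hx hy
          rw [hx, hy]
        exact this ▸ Reachable.refl _
      · exact ⟨⟨v, by simp⟩⟩
    · obtain ⟨T, hTC, hTcard, hTconn⟩ := ih hm (le_trans (Nat.le_succ m) hmC)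
      have hlt : T.card < C.card := hTcard ▸ hmC
      obtain ⟨x, hxC, hxT⟩ : ∃ x ∈ C, x ∉ T := by
        by_contra hcon
        push_neg at hcon
        exact absurd (Finset.card_le_card hcon) (not_le.mpr hlt)
      obtain ⟨t, ht⟩ := Finset.card_pos.mp (hTcard ▸ hm)
      obtain ⟨p⟩ := hC ⟨t, hTC ht⟩ ⟨x, hxC⟩
      obtain ⟨u, huT, w, hwC, hwT, hadj⟩ := crossing_aux G T p ht hxT
      refine ⟨insert w T, Finset.insert_subset hwC hTC, ?_, ?_⟩
      · rw [Finset.card_insert_of_notMem hwT, hTcard]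
      · have hpair : (G.induce ({w, u} : Set V)).Connected :=
          induce_pair_connected_of_adj hadj.symm
        have hconn2 := induce_union_connected hTconn.preconnected hpair.preconnected
          ⟨u, Set.mem_inter (by exact_mod_cast huT) (by simp)⟩
        have hset : (↑T : Set V) ∪ {w, u} = ↑(insert w T) := by
          ext y
          simp only [Set.mem_union, Set.mem_insert_iff, Finset.coe_insert, Finset.mem_coe,
            Set.mem_singleton_iff]
          constructor
          · rintro (h | h | h)
            · exact Or.inr h
            · exact Or.inl h
            · exact Or.inr (h ▸ huT)
          · rintro (h | h)
            · exact Or.inr (Or.inl h)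
            · exact Or.inl h
        rwa [hset] at hconn2

private lemma cloud_aux (k : ℕ) (hk : 0 < k) :
    ∀ S : Finset V, ∃ P : Finpartition S,
      (∀ p ∈ P.parts, (G.induce (↑p : Set V)).Connected ∧ p.card ≤ k) ∧
      (∀ p ∈ P.parts, ∀ q ∈ P.parts, p ≠ q → p.card < k → q.card < k →
        ¬ ∃ u ∈ p, ∃ v ∈ q, G.Adj u v) := by
  intro S
  induction S using Finset.strongInduction with
  | _ S ih =>
  classical
  rcases S.eq_empty_or_nonempty with rfl | ⟨v, hv⟩
  · refine ⟨Finpartition.empty _, ?_, ?_⟩ <;>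
      · intro p hp
        simp [Finpartition.empty] at hp
  · -- the component of v inside S
    set C : Finset V := S.filter (fun u => ∃ p : G.Walk v u, ∀ x ∈ p.support, x ∈ S) with hCdef
    have hCS : C ⊆ S := Finset.filter_subset _ _
    have hvC : v ∈ C := by
      refine Finset.mem_filter.mpr ⟨hv, SimpleGraph.Walk.nil, ?_⟩
      intro x hx
      simp only [SimpleGraph.Walk.support_nil, List.mem_singleton] at hx
      exact hx ▸ hv
    -- closure property
    have hclosed : ∀ u ∈ C, ∀ w ∈ S, G.Adj u w → w ∈ C := by
      intro u huC w hwS hadj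
      obtain ⟨hu, p, hp⟩ := Finset.mem_filter.mp huC
      refine Finset.mem_filter.mpr ⟨hwS, p.concat hadj, ?_⟩
      intro x hx
      rw [SimpleGraph.Walk.support_concat, List.mem_append] at hx
      rcases hx with hx | hx
      · exact hp x hx
      · simp only [List.mem_singleton] at hx
        exact hx ▸ hwS
    -- C is connected
    have hCconn : (G.induce (↑C : Set V)).Connected := by
      have key : ∀ u (hu : u ∈ C), (G.induce (↑C : Set V)).Reachable ⟨v, hvC⟩ ⟨u, hu⟩ := by
        intro u hu
        obtain ⟨huS, p, hp⟩ := Finset.mem_filter.mp hu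
        have hsupp : ∀ x ∈ p.support, x ∈ (↑C : Set V) := by
          intro x hx
          exact Finset.mem_filter.mpr ⟨hp x hx, p.takeUntil x hx,
            fun y hy => hp y (SimpleGraph.Walk.support_takeUntil_subset p hx hy)⟩
        exact reach_induce_of_walk G hvC hu p hsupp
      rw [SimpleGraph.connected_iff]
      constructor
      · rintro ⟨x, hx⟩ ⟨y, hy⟩
        exact (key x hx).symm.trans (key y hy)
      · exact ⟨⟨v, hvC⟩⟩
    by_cases hkC : k ≤ C.card
    · -- big cloud: take a connected subset of size exactly k
      obtain ⟨T, hTC, hTcard, hTconn⟩ := exists_conn_subset G hCconn k hk hkC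
      have hTS : T ⊆ S := hTC.trans hCS
      have hTne : T.Nonempty := Finset.card_pos.mp (hTcard ▸ hk)
      obtain ⟨P', hP'1, hP'2⟩ := ih (S \ T) (Finset.sdiff_ssubset hTS hTne)
      refine ⟨P'.extend (b := T) (by simpa [Finset.bot_eq_empty] using hTne.ne_empty)
        Finset.sdiff_disjoint (by rw [Finset.sup_eq_union]; exact Finset.sdiff_union_of_subset hTS),
        ?_, ?_⟩
      · intro p hp
        rw [Finpartition.extend_parts, Finset.mem_insert] at hp
        rcases hp with rfl | hp
        · exact ⟨hTconn, le_of_eq hTcard⟩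
        · exact hP'1 p hp
      · intro p hp q hq hpq hpk hqk
        rw [Finpartition.extend_parts, Finset.mem_insert] at hp hq
        rcases hp with rfl | hp
        · exact absurd hpk (by rw [hTcard]; exact lt_irrefl k)
        rcases hq with rfl | hq
        · exact absurd hqk (by rw [hTcard]; exact lt_irrefl k)
        exact hP'2 p hp q hq hpq hpk hqk
    · -- small cloud: take the whole component C
      push_neg at hkC
      have hCne : C.Nonempty := ⟨v, hvC⟩
      obtain ⟨P', hP'1, hP'2⟩ := ih (S \ C) (Finset.sdiff_ssubset hCS hCne)
      have hnoedge : ∀ u ∈ C, ∀ w ∈ S \ C, ¬ G.Adj u w := by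
        intro u hu w hw hadj
        rw [Finset.mem_sdiff] at hw
        exact hw.2 (hclosed u hu w hw.1 hadj)
      refine ⟨P'.extend (b := C) (by simpa [Finset.bot_eq_empty] using hCne.ne_empty)
        Finset.sdiff_disjoint (by rw [Finset.sup_eq_union]; exact Finset.sdiff_union_of_subset hCS),
        ?_, ?_⟩
      · intro p hp
        rw [Finpartition.extend_parts, Finset.mem_insert] at hp
        rcases hp with rfl | hp
        · exact ⟨hCconn, le_of_lt hkC⟩
        · exact hP'1 p hp
      · intro p hp q hq hpq hpk hqk
        rw [Finpartition.extend_parts, Finset.mem_insert] at hp hq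
        rcases hp with rfl | hp
        · rcases hq with rfl | hq
          · exact absurd rfl hpq
          · rintro ⟨u, hu, w, hw, hadj⟩
            exact hnoedge u hu w (P'.le hq hw) hadj
        rcases hq with rfl | hq
        · rintro ⟨u, hu, w, hw, hadj⟩
          exact hnoedge w hw u (P'.le hp hu) hadj.symm
        exact hP'2 p hp q hq hpq hpk hqk

end aux

/-- Existence of cloud partitions: every connected graph on `n` vertices admits, for any
`0 < k ≤ n`, a partition of its vertex set into connected parts of size at most `k` such
that no two parts of size strictly less than `k` are adjacent. -/
theorem cloud_partition_exists {V : Type*} [Fintype V] [DecidableEq V]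
    (G : SimpleGraph V) (hconn : G.Connected)
    (k : ℕ) (hk : 0 < k) (hkn : k ≤ Fintype.card V) :
    ∃ P : Finpartition (Finset.univ : Finset V),
      (∀ p ∈ P.parts, (G.induce (↑p : Set V)).Connected ∧ p.card ≤ k) ∧
      (∀ p ∈ P.parts, ∀ q ∈ P.parts, p ≠ q → p.card < k → q.card < k →
        ¬ ∃ u ∈ p, ∃ v ∈ q, G.Adj u v) := by
  exact cloud_aux G k hk Finset.univ
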